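/- Let C, Q, b be positive integers and let y, a be integers with b | QC, gcd(a, C) = 1 and gcd(y, QC/b) = 1. Then QC divides Qa + by if and only if b = Q and C divides a + y. -/

import Mathlib

/-- For positive integers `C, Q, b` and integers `y, a` with `b ∣ QC`, `gcd(a, C) = 1`
and `gcd(y, QC/b) = 1`, one has `QC ∣ Qa + by` if and only if `b = Q` and `C ∣ a + y`. -/
theorem divisibility_criterion
    (C Q b : ℕ) (hC : 0 < C) (hQ : 0 < Q) (hb : 0 < b)
    (y a : ℤ) (hbQC : b ∣ Q * C)
    (ha : Int.gcd a (C : ℤ) = 1)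
    (hy : Int.gcd y ((Q * C / b : ℕ) : ℤ) = 1) :
    ((Q : ℤ) * (C : ℤ)) ∣ ((Q : ℤ) * a + (b : ℤ) * y) ↔ (b = Q ∧ (C : ℤ) ∣ (a + y)) := by
  constructor
  · intro h
    set g := Nat.gcd Q b with hg
    have hg0 : 0 < g := Nat.gcd_pos_of_pos_left b hQ
    obtain ⟨Q', hQ'⟩ : g ∣ Q := Nat.gcd_dvd_left Q b
    obtain ⟨b', hb'⟩ : g ∣ b := Nat.gcd_dvd_right Q b
    have hcop : Nat.Coprime Q' b' := by
      have h2 := Nat.coprime_div_gcd_div_gcd (m := Q) (n := b) hg0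
      rw [← hg, hQ', hb', Nat.mul_div_cancel_left _ hg0, Nat.mul_div_cancel_left _ hg0] at h2
      exact h2
    -- Step 1: Q ∣ b*y
    have h1 : (Q : ℤ) ∣ (b : ℤ) * y := by
      have h2 : (Q : ℤ) ∣ (Q : ℤ) * a + (b : ℤ) * y := dvd_trans (dvd_mul_right _ _) h
      exact (dvd_add_right (dvd_mul_right _ _)).mp h2
    -- Step 2: Q' ∣ y
    have hQ'y : (Q' : ℤ) ∣ y := by
      have h2 : (Q' : ℤ) ∣ (b' : ℤ) * y := by
        have h3 : ((g : ℤ) * Q') ∣ (g : ℤ) * ((b' : ℤ) * y) := by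
          rw [← mul_assoc]
          have : ((g : ℤ) * b') = (b : ℤ) := by push_cast [hb']; ring
          rw [this]
          exact_mod_cast (by push_cast [hQ'] at h1 ⊢; convert h1 using 2 <;> ring_nf : ((g : ℤ) * Q') ∣ (b : ℤ) * y)
        exact (mul_dvd_mul_iff_left (by exact_mod_cast hg0.ne' : (g : ℤ) ≠ 0)).mp h3
      have hcopInt : IsCoprime (Q' : ℤ) (b' : ℤ) := by
        rw [Int.isCoprime_iff_gcd_eq_one, Int.gcd_natCast_natCast]
        exact hcop
      exact hcopInt.dvd_of_dvd_mul_left h2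
    -- Step 3: b' ∣ C
    have hb'C : b' ∣ C := by
      have h2 : b' ∣ Q' * C := by
        have h3 : g * b' ∣ g * (Q' * C) := by
          rw [← mul_assoc, ← hQ', ← hb']; exact hbQC
        exact (Nat.mul_dvd_mul_iff_left hg0).mp h3
      exact (Nat.Coprime.dvd_of_dvd_mul_left (hcop.symm) h2)
    obtain ⟨C', hC'⟩ := hb'C
    -- Step 4: Q*C/b = Q' * C'
    have hd : Q * C / b = Q' * C' := by
      have h2 : Q * C = b * (Q' * C') := by
        rw [hQ', hb', hC']; ring
      rw [h2, Nat.mul_div_cancel_left _ hb]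
    -- Step 5: Q' = 1
    have hQ'1 : Q' = 1 := by
      have h2 : (Q' : ℤ) ∣ ((Q * C / b : ℕ) : ℤ) := by
        rw [hd]; push_cast; exact dvd_mul_right _ _
      have h3 : (Q' : ℤ) ∣ (Int.gcd y ((Q * C / b : ℕ) : ℤ) : ℤ) := Int.dvd_coe_gcd hQ'y h2
      rw [hy] at h3
      exact_mod_cast Int.eq_one_of_dvd_one (by positivity) h3
    have hQg : Q = g := by rw [hQ', hQ'1, mul_one]
    have hbQ : b = Q * b' := by rw [hb', hQg]
    -- Step 6: cancel Q
    have hCdvd : (C : ℤ) ∣ a + (b' : ℤ) * y := by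
      have h2 : (Q : ℤ) * (C : ℤ) ∣ (Q : ℤ) * (a + (b' : ℤ) * y) := by
        have : (Q : ℤ) * (a + (b' : ℤ) * y) = (Q : ℤ) * a + (b : ℤ) * y := by
          rw [hbQ]; push_cast; ring
        rw [this]; exact h
      exact (mul_dvd_mul_iff_left (by exact_mod_cast hQ.ne' : (Q : ℤ) ≠ 0)).mp h2
    have hb'Cint : (b' : ℤ) ∣ (C : ℤ) := Int.natCast_dvd_natCast.mpr ⟨C', hC'⟩
    have hb'a : (b' : ℤ) ∣ a := by
      have h2 : (b' : ℤ) ∣ a + (b' : ℤ) * y := dvd_trans hb'Cint hCdvd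
      have h3 : (b' : ℤ) ∣ (b' : ℤ) * y := dvd_mul_right _ _
      have h4 := dvd_sub h2 h3
      simpa using h4
    have hb'1 : b' = 1 := by
      have h3 : (b' : ℤ) ∣ (Int.gcd a (C : ℤ) : ℤ) := Int.dvd_coe_gcd hb'a hb'Cint
      rw [ha] at h3
      have hb'0 : 0 < b' := by
        rcases Nat.eq_zero_or_pos b' with h0 | h0
        · exfalso; rw [h0, mul_zero] at hb'; exact hb.ne' hb'
        · exact h0
      exact_mod_cast Int.eq_one_of_dvd_one (by positivity) h3
    have hbQ2 : b = Q := by rw [hbQ, hb'1, mul_one]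
    refine ⟨hbQ2, ?_⟩
    rw [hb'1] at hCdvd
    simpa using hCdvd
  · rintro ⟨rfl, hCa⟩
    obtain ⟨k, hk⟩ := hCa
    exact ⟨k, by rw [mul_assoc, ← hk]; ring⟩
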